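/- Let x_1, …, x_n be positive real numbers satisfying ∑_{i=1}^n (x_i - 1)² ≤ ε where 0 < ε < 1/2 and ε < n. Then |∑_{i=1}^n log x_i| ≤ -n log(1 - √(ε/n)). -/

import Mathlib

/-- every nonempty list has an element whose square is at least the average of squares -/
lemma list_exists_sq_ge : ∀ (l : List ℝ), l ≠ [] →
    ∃ a ∈ l, (l.map (fun t => t ^ 2)).sum ≤ (l.length : ℝ) * a ^ 2 := by
  intro l
  induction l with
  | nil => simp
  | cons x xs ih =>
    intro _
    rcases eq_or_ne xs [] with rfl | hxs
    · exact ⟨x, by simp, by simp⟩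
    · obtain ⟨a, ha, hsum⟩ := ih hxs
      rcases le_total (x ^ 2) (a ^ 2) with h | h
      · refine ⟨a, List.mem_cons_of_mem _ ha, ?_⟩
        simp only [List.map_cons, List.sum_cons, List.length_cons]
        push_cast
        linarith
      · refine ⟨x, List.mem_cons_self, ?_⟩
        simp only [List.map_cons, List.sum_cons, List.length_cons]
        push_cast
        nlinarith [Nat.cast_nonneg (α := ℝ) xs.length]

/-- every nonempty list has an element whose square is at most the average of squares -/
lemma list_exists_sq_le : ∀ (l : List ℝ), l ≠ [] →
    ∃ a ∈ l, (l.length : ℝ) * a ^ 2 ≤ (l.map (fun t => t ^ 2)).sum := by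
  intro l
  induction l with
  | nil => simp
  | cons x xs ih =>
    intro _
    rcases eq_or_ne xs [] with rfl | hxs
    · exact ⟨x, by simp, by simp⟩
    · obtain ⟨a, ha, hsum⟩ := ih hxs
      rcases le_total (x ^ 2) (a ^ 2) with h | h
      · refine ⟨x, List.mem_cons_self, ?_⟩
        simp only [List.map_cons, List.sum_cons, List.length_cons]
        push_cast
        nlinarith [Nat.cast_nonneg (α := ℝ) xs.length]
      · refine ⟨a, List.mem_cons_of_mem _ ha, ?_⟩
        simp only [List.map_cons, List.sum_cons, List.length_cons]
        push_cast
        linarith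

lemma list_map_sq_sum_nonneg (l : List ℝ) : 0 ≤ (l.map (fun t => t ^ 2)).sum := by
  induction l with
  | nil => simp
  | cons x xs ih => simp only [List.map_cons, List.sum_cons]; positivity

lemma list_prod_nonneg' : ∀ (l : List ℝ), (∀ t ∈ l, 0 ≤ t) → 0 ≤ l.prod := by
  intro l
  induction l with
  | nil => simp
  | cons x xs ih =>
    intro h
    rw [List.prod_cons]
    exact mul_nonneg (h x (List.mem_cons_self))
      (ih fun t ht => h t (List.mem_cons_of_mem _ ht))

lemma list_sq_le_sum {l : List ℝ} {b : ℝ} (hb : b ∈ l) :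
    b ^ 2 ≤ (l.map (fun t => t ^ 2)).sum := by
  induction l with
  | nil => simp at hb
  | cons x xs ih =>
    simp only [List.map_cons, List.sum_cons]
    rcases List.mem_cons.mp hb with rfl | hb'
    · linarith [list_map_sq_sum_nonneg xs]
    · have := ih hb'
      nlinarith [sq_nonneg x]

lemma one_sub_nonneg_of_sq_le_half {s : ℝ} (h0 : 0 ≤ s) (h : s ^ 2 ≤ 1 / 2) : 0 ≤ 1 - s := by
  nlinarith

/-- the two-variable smoothing step: if `c² + d² = a² + b²`, `b ≤ c ≤ a`,
and `a² + b² ≤ 1/2`, then `(1-c)(1-d) ≤ (1-a)(1-b)`. -/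
lemma pair_smoothing {a b c d : ℝ} (ha : 0 ≤ a) (hb : 0 ≤ b) (hc : 0 ≤ c) (hd : 0 ≤ d)
    (hsq : c ^ 2 + d ^ 2 = a ^ 2 + b ^ 2) (hbc : b ≤ c) (hca : c ≤ a)
    (hK : a ^ 2 + b ^ 2 ≤ 1 / 2) :
    (1 - c) * (1 - d) ≤ (1 - a) * (1 - b) := by
  have h1 : a * b ≤ c * d := by
    nlinarith [mul_nonneg (by nlinarith : (0:ℝ) ≤ c ^ 2 - b ^ 2)
        (by nlinarith : (0:ℝ) ≤ a ^ 2 - c ^ 2),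
      mul_nonneg ha hb, mul_nonneg hc hd]
  have hs1 : a + b ≤ 1 := by nlinarith [sq_nonneg (a - b)]
  have hS1 : c + d ≤ 1 := by nlinarith [sq_nonneg (c - d)]
  have hSs : a + b ≤ c + d := by nlinarith [mul_nonneg ha hb, mul_nonneg hc hd]
  nlinarith [mul_nonneg (sub_nonneg.2 hSs) (by linarith : (0:ℝ) ≤ 2 - (c + d) - (a + b))]

/-- Key product bound: for a list of nonnegatives whose squares sum to `Q ≤ 1/2`,
`∏ (1 - tᵢ) ≥ (1 - √(Q/n))^n`. -/
lemma list_prod_one_sub_ge : ∀ (n : ℕ) (l : List ℝ), l.length = n → (∀ t ∈ l, 0 ≤ t) →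
    (l.map (fun t => t ^ 2)).sum ≤ 1 / 2 →
    (1 - Real.sqrt ((l.map (fun t => t ^ 2)).sum / n)) ^ n ≤ (l.map (fun t => 1 - t)).prod := by
  intro n
  induction n with
  | zero =>
    intro l hlen _ _
    rw [List.length_eq_zero_iff] at hlen
    subst hlen
    simp
  | succ n ih =>
    intro l hlen h0 hQ
    have hQ0 : 0 ≤ (l.map (fun t => t ^ 2)).sum := list_map_sq_sum_nonneg l
    set Q : ℝ := (l.map (fun t => t ^ 2)).sum with hQdef
    have hlne : l ≠ [] := by intro h; rw [h] at hlen; simp at hlen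
    set u2 : ℝ := Q / (n + 1) with hu2
    have hnp : (0:ℝ) < (n:ℝ) + 1 := by positivity
    have hu2nonneg : 0 ≤ u2 := by positivity
    have hu2half : u2 ≤ 1 / 2 := by
      rw [hu2, div_le_iff₀ hnp]
      nlinarith
    have hcast : ((n + 1 : ℕ) : ℝ) = (n : ℝ) + 1 := by push_cast; ring
    rcases Nat.eq_zero_or_pos n with rfl | hn
    · -- single element list
      obtain ⟨t, rfl⟩ := List.length_eq_one_iff.mp hlen
      have ht0 : 0 ≤ t := h0 t (by simp)
      have hQt : Q = t ^ 2 := by rw [hQdef]; simp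
      simp only [List.map_cons, List.map_nil, List.prod_cons, List.prod_nil, mul_one, pow_one]
      norm_num [hQt]
      try rw [Real.sqrt_sq ht0]
      try linarith
    · -- pick a with a² ≥ average
      obtain ⟨a, ha_mem, haQ⟩ := list_exists_sq_ge l hlne
      have ha0 : 0 ≤ a := h0 a ha_mem
      have hau : u2 ≤ a ^ 2 := by
        rw [hu2, div_le_iff₀ hnp]
        rw [hlen, hcast] at haQ
        linarith
      set l1 : List ℝ := l.erase a with hl1
      have hperm1 : l.Perm (a :: l1) := List.perm_cons_erase ha_mem
      have hl1len : l1.length = n := by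
        have h := hperm1.length_eq
        simp only [List.length_cons] at h
        omega
      have hl1ne : l1 ≠ [] := by
        intro h
        rw [h] at hl1len
        simp at hl1len
        omega
      have hl1sub : ∀ t ∈ l1, t ∈ l := fun t ht => (hperm1.mem_iff).2 (List.mem_cons_of_mem _ ht)
      have hQ1 : (l1.map (fun t => t ^ 2)).sum = Q - a ^ 2 := by
        have h := (hperm1.map (fun t => t ^ 2)).sum_eq
        simp only [List.map_cons, List.sum_cons] at h
        rw [hQdef]
        linarith
      -- pick b in l1 with b² ≤ average
      obtain ⟨b, hb_mem, hbQ⟩ := list_exists_sq_le l1 hl1ne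
      have hb0 : 0 ≤ b := h0 b (hl1sub b hb_mem)
      have hn' : (0:ℝ) < (n:ℝ) := by exact_mod_cast hn
      have hQu : Q = ((n:ℝ) + 1) * u2 := by rw [hu2]; field_simp
      have hbu : b ^ 2 ≤ u2 := by
        rw [hl1len, hQ1] at hbQ
        have h2 : (n:ℝ) * b ^ 2 ≤ (n:ℝ) * u2 := by nlinarith
        exact le_of_mul_le_mul_left h2 hn'
      set l2 : List ℝ := l1.erase b with hl2
      have hperm2 : l1.Perm (b :: l2) := List.perm_cons_erase hb_mem
      have hl2len : l2.length = n - 1 := by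
        have h := hperm2.length_eq
        simp only [List.length_cons] at h
        omega
      have hl2sub : ∀ t ∈ l2, t ∈ l := fun t ht =>
        hl1sub t ((hperm2.mem_iff).2 (List.mem_cons_of_mem _ ht))
      have hQ2 : (l2.map (fun t => t ^ 2)).sum = Q - a ^ 2 - b ^ 2 := by
        have h := (hperm2.map (fun t => t ^ 2)).sum_eq
        simp only [List.map_cons, List.sum_cons] at h
        rw [← hQ1]
        linarith
      -- the smoothing replacement values
      set c : ℝ := Real.sqrt u2 with hcdef
      set w : ℝ := Real.sqrt (a ^ 2 + b ^ 2 - u2) with hwdef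
      have hc0 : 0 ≤ c := Real.sqrt_nonneg _
      have hw0 : 0 ≤ w := Real.sqrt_nonneg _
      have hab2 : 0 ≤ a ^ 2 + b ^ 2 - u2 := by nlinarith
      have hw2 : w ^ 2 = a ^ 2 + b ^ 2 - u2 := Real.sq_sqrt hab2
      have hc2 : c ^ 2 = u2 := Real.sq_sqrt hu2nonneg
      have hbc : b ≤ c := by
        rw [hcdef, show b = Real.sqrt (b ^ 2) from (Real.sqrt_sq hb0).symm]
        exact Real.sqrt_le_sqrt hbu
      have hca : c ≤ a := by
        rw [hcdef, show a = Real.sqrt (a ^ 2) from (Real.sqrt_sq ha0).symm]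
        exact Real.sqrt_le_sqrt hau
      have habK : a ^ 2 + b ^ 2 ≤ 1 / 2 := by
        have hb2l1 : b ^ 2 ≤ Q - a ^ 2 := by rw [← hQ1]; exact list_sq_le_sum hb_mem
        linarith
      -- apply induction hypothesis to w :: l2
      set rest : List ℝ := w :: l2 with hrest
      have hrestlen : rest.length = n := by
        rw [hrest, List.length_cons, hl2len]
        omega
      have hrest0 : ∀ t ∈ rest, 0 ≤ t := by
        intro t ht
        rcases List.mem_cons.mp ht with rfl | ht'
        · exact hw0
        · exact h0 t (hl2sub t ht')
      have hQrest : (rest.map (fun t => t ^ 2)).sum = (n:ℝ) * u2 := by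
        simp only [hrest, List.map_cons, List.sum_cons]
        rw [hw2, hQ2]
        linarith [hQu]
      have hQresthalf : (rest.map (fun t => t ^ 2)).sum ≤ 1 / 2 := by
        rw [hQrest]
        linarith [hQu, hu2nonneg]
      have hIH := ih rest hrestlen hrest0 hQresthalf
      rw [hQrest] at hIH
      have havg : (n:ℝ) * u2 / (n:ℝ) = u2 := by field_simp
      rw [havg] at hIH
      -- assemble
      have hprodl : (l.map (fun t => 1 - t)).prod
          = (1 - a) * ((1 - b) * (l2.map (fun t => 1 - t)).prod) := by
        have h1 := (hperm1.map (fun t => 1 - t)).prod_eq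
        have h2 := (hperm2.map (fun t => 1 - t)).prod_eq
        simp only [List.map_cons, List.prod_cons] at h1 h2
        rw [h1, h2]
      have hprodrest : (rest.map (fun t => 1 - t)).prod
          = (1 - w) * (l2.map (fun t => 1 - t)).prod := by
        simp [hrest]
      have hP2 : 0 ≤ (l2.map (fun t => 1 - t)).prod := by
        apply list_prod_nonneg'
        intro t ht
        simp only [List.mem_map] at ht
        obtain ⟨s, hs, rfl⟩ := ht
        have hs0 : 0 ≤ s := h0 s (hl2sub s hs)
        have hs2 : s ^ 2 ≤ Q := by
          have := list_sq_le_sum (l := l) (b := s) (hl2sub s hs)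
          exact this
        exact one_sub_nonneg_of_sq_le_half hs0 (by linarith)
      have hpair : (1 - c) * (1 - w) ≤ (1 - a) * (1 - b) :=
        pair_smoothing ha0 hb0 hc0 hw0 (by rw [hc2, hw2]; ring) hbc hca habK
      have hc1 : c ≤ 1 := by
        have := one_sub_nonneg_of_sq_le_half hc0 (by rw [hc2]; linarith)
        linarith
      have hsqQ : Real.sqrt (Q / ((n:ℕ) + 1 : ℕ)) = c := by
        rw [hcdef, hu2]
        norm_num
      calc (1 - Real.sqrt (Q / ((n:ℕ) + 1 : ℕ))) ^ (n + 1)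
          = (1 - c) ^ (n + 1) := by rw [hsqQ]
        _ = (1 - c) * (1 - c) ^ n := by ring
        _ ≤ (1 - c) * ((1 - w) * (l2.map (fun t => 1 - t)).prod) := by
            apply mul_le_mul_of_nonneg_left _ (by linarith)
            rw [← hprodrest]
            exact hIH
        _ = ((1 - c) * (1 - w)) * (l2.map (fun t => 1 - t)).prod := by ring
        _ ≤ ((1 - a) * (1 - b)) * (l2.map (fun t => 1 - t)).prod :=
            mul_le_mul_of_nonneg_right hpair hP2
        _ = (l.map (fun t => 1 - t)).prod := by rw [hprodl]; ring

open Finset in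
/-- If positive reals `x₁, …, xₙ` satisfy `∑ (xᵢ - 1)² ≤ ε` with `0 < ε < 1/2` and `ε < n`,
then `|∑ log xᵢ| ≤ -n log(1 - √(ε/n))`. -/
theorem abs_sum_log_le (n : ℕ) (hn : 0 < n) (x : Fin n → ℝ) (hx : ∀ i, 0 < x i)
    (ε : ℝ) (hε0 : 0 < ε) (hε : ε < 1 / 2) (hεn : ε < n)
    (hsum : ∑ i, (x i - 1) ^ 2 ≤ ε) :
    |∑ i, Real.log (x i)| ≤ -(n : ℝ) * Real.log (1 - Real.sqrt (ε / n)) := by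
  have hn0 : (0:ℝ) < n := Nat.cast_pos.mpr hn
  set u : ℝ := Real.sqrt (ε / n) with hu
  have hu0 : 0 < u := Real.sqrt_pos.mpr (div_pos hε0 hn0)
  have hu1 : u < 1 := by
    rw [hu, show (1:ℝ) = Real.sqrt 1 by simp]
    exact Real.sqrt_lt_sqrt (by positivity) ((div_lt_one hn0).mpr hεn)
  have h1u : 0 < 1 - u := by linarith
  -- the list of |x i - 1|
  set l : List ℝ := List.ofFn (fun i => |x i - 1|) with hl
  have hllen : l.length = n := by simp [hl]
  have hQeq : (l.map (fun t => t ^ 2)).sum = ∑ i, (x i - 1) ^ 2 := by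
    rw [hl, List.map_ofFn, List.sum_ofFn]
    simp [Function.comp, sq_abs]
  have hQhalf : (l.map (fun t => t ^ 2)).sum ≤ 1 / 2 := by
    rw [hQeq]; linarith
  have h0 : ∀ t ∈ l, 0 ≤ t := by
    intro t ht
    rw [hl, List.mem_ofFn] at ht
    obtain ⟨i, rfl⟩ := ht
    exact abs_nonneg _
  have hkey := list_prod_one_sub_ge n l hllen h0 hQhalf
  have hprod_eq : (l.map (fun t => 1 - t)).prod = ∏ i, (1 - |x i - 1|) := by
    rw [hl, List.map_ofFn, List.prod_ofFn]
    simp [Function.comp]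
  -- compare √(Q/n) with u
  have hQε : (l.map (fun t => t ^ 2)).sum ≤ ε := by rw [hQeq]; exact hsum
  have hQ0 : 0 ≤ (l.map (fun t => t ^ 2)).sum := list_map_sq_sum_nonneg l
  have hsqle : Real.sqrt ((l.map (fun t => t ^ 2)).sum / n) ≤ u := by
    rw [hu]
    apply Real.sqrt_le_sqrt
    gcongr
  have hchain : (1 - u) ^ n ≤ ∏ i, (1 - |x i - 1|) := by
    calc (1 - u) ^ n ≤ (1 - Real.sqrt ((l.map (fun t => t ^ 2)).sum / n)) ^ n := by
          apply pow_le_pow_left₀ h1u.le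
          linarith
      _ ≤ (l.map (fun t => 1 - t)).prod := hkey
      _ = ∏ i, (1 - |x i - 1|) := hprod_eq
  -- each 1 - |x i - 1| is between 0 and x i
  have habs1 : ∀ i, |x i - 1| ≤ 1 := by
    intro i
    have h1 : (x i - 1) ^ 2 ≤ ε :=
      le_trans (Finset.single_le_sum (fun j _ => sq_nonneg (x j - 1)) (mem_univ i)) hsum
    nlinarith [abs_nonneg (x i - 1), sq_abs (x i - 1)]
  have hle_x : ∀ i, 1 - |x i - 1| ≤ x i := by
    intro i
    rcases abs_cases (x i - 1) with ⟨h, _⟩ | ⟨h, _⟩ <;> rw [h] <;> linarith [(hx i).le]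
  have hxprod : ∏ i, (1 - |x i - 1|) ≤ ∏ i, x i :=
    Finset.prod_le_prod (fun i _ => by linarith [habs1 i]) (fun i _ => hle_x i)
  have hpowpos : (0:ℝ) < (1 - u) ^ n := pow_pos h1u n
  -- lower bound on the sum of logs
  have hlower : (n:ℝ) * Real.log (1 - u) ≤ ∑ i, Real.log (x i) := by
    have h1 : Real.log ((1 - u) ^ n) ≤ Real.log (∏ i, x i) :=
      Real.log_le_log hpowpos (le_trans hchain hxprod)
    rw [Real.log_pow] at h1
    rw [Real.log_prod (fun i _ => (hx i).ne')] at h1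
    exact_mod_cast h1
  -- upper bound on the sum of logs
  have hupper : ∑ i, Real.log (x i) ≤ (n:ℝ) * u := by
    have h1 : ∑ i, Real.log (x i) ≤ ∑ i, (x i - 1) :=
      Finset.sum_le_sum fun i _ => Real.log_le_sub_one_of_pos (hx i)
    have h2 : ∑ i, (x i - 1) ≤ ∑ i, |x i - 1| :=
      Finset.sum_le_sum fun i _ => le_abs_self _
    have h3 : (∑ i, |x i - 1|) ^ 2 ≤ (n:ℝ) * ε := by
      calc (∑ i, |x i - 1|) ^ 2
          ≤ (univ : Finset (Fin n)).card * ∑ i, |x i - 1| ^ 2 := sq_sum_le_card_mul_sum_sq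
        _ ≤ (n:ℝ) * ε := by
            simp only [card_univ, Fintype.card_fin]
            apply mul_le_mul_of_nonneg_left _ (Nat.cast_nonneg n)
            simpa [sq_abs] using hsum
    have h4 : (n:ℝ) * u = Real.sqrt ((n:ℝ) * ε) := by
      rw [hu, show (n:ℝ) * ε = (n:ℝ) ^ 2 * (ε / n) by field_simp,
        Real.sqrt_mul (by positivity : (0:ℝ) ≤ (n:ℝ) ^ 2), Real.sqrt_sq hn0.le]
    have h5 : ∑ i, |x i - 1| ≤ (n:ℝ) * u := by
      rw [h4]
      exact (Real.le_sqrt (Finset.sum_nonneg fun i _ => abs_nonneg _) (by positivity)).mpr h3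
    linarith
  have hlog_le : Real.log (1 - u) ≤ -u := by
    have := Real.log_le_sub_one_of_pos h1u
    linarith
  rw [abs_le]
  constructor
  · have : -(-(n:ℝ) * Real.log (1 - u)) = (n:ℝ) * Real.log (1 - u) := by ring
    rw [this]
    exact hlower
  · have : (n:ℝ) * u ≤ -(n:ℝ) * Real.log (1 - u) := by nlinarith
    linarith
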